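/- For every integer d ≥ 4, one has ( (d² + 2d)^{d−1} / (d−1)! ) · (1/d)^{d+1} · ∏_{k=1}^{d−1} (d+1+k)/(d²+d+k) < 1/(d−1). -/

import Mathlib

open Finset in
lemma aux_prod_succ (n : ℕ) : ∏ k ∈ Finset.Icc 1 n, (k + 1) = (n + 1).factorial := by
  induction n with
  | zero => simp
  | succ m ih =>
      rw [Finset.prod_Icc_succ_top (by omega), ih,
        show m + 1 + 1 = m + 2 from rfl, show (m+2).factorial = (m+2) * (m+1).factorial from rfl]
      ring

theorem stmt_14 (d : ℕ) (hd : 4 ≤ d) :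
    ((d : ℝ) ^ 2 + 2 * d) ^ (d - 1) / ((d - 1).factorial : ℝ) * (1 / (d : ℝ)) ^ (d + 1) *
        ∏ k ∈ Finset.Icc 1 (d - 1), ((d : ℝ) + 1 + k) / ((d : ℝ) ^ 2 + d + k) <
      1 / ((d : ℝ) - 1) := by
  obtain ⟨n, rfl⟩ : ∃ n, d = n + 4 := ⟨d - 4, by omega⟩
  set x : ℝ := (n : ℝ) + 4 with hx
  have hxc : ((n + 4 : ℕ) : ℝ) = x := by push_cast [hx]; ring
  have hx0 : (0:ℝ) < x := by positivity
  have hx2 : (0:ℝ) < x + 2 := by positivity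
  have hstep1 : ∏ k ∈ Finset.Icc 1 (n + 4 - 1), (((n+4 : ℕ) : ℝ) + 1 + k) / (((n+4:ℕ) : ℝ) ^ 2 + (n+4:ℕ) + k)
      ≤ ∏ k ∈ Finset.Icc 1 (n + 4 - 1), ((k : ℝ) + 1) / (x + 2) := by
    apply Finset.prod_le_prod
    · intro k hk
      have : (0:ℝ) ≤ (k:ℝ) := by positivity
      positivity
    · intro k hk
      have hk1 : (1:ℝ) ≤ (k:ℝ) := by
        simp only [Finset.mem_Icc] at hk
        exact_mod_cast hk.1
      rw [hxc, div_le_div_iff₀ (by positivity) (by positivity)]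
      nlinarith [sq_nonneg x, mul_le_mul_of_nonneg_left (by nlinarith : (4:ℝ) ≤ x) (by linarith : (0:ℝ) ≤ (k:ℝ) - 1)]
  have hstep2 : ∏ k ∈ Finset.Icc 1 (n + 4 - 1), ((k : ℝ) + 1) / (x + 2)
      = ((n + 4).factorial : ℝ) / (x + 2) ^ (n + 4 - 1) := by
    rw [Finset.prod_div_distrib, Finset.prod_const, Nat.card_Icc,
      show n + 4 - 1 + 1 - 1 = n + 4 - 1 from by omega]
    congr 1
    have h : ((∏ k ∈ Finset.Icc 1 (n+3), (k + 1) : ℕ) : ℝ) = ((n+4).factorial : ℝ) := by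
      rw [aux_prod_succ (n+3)]
    push_cast at h
    rw [show n + 4 - 1 = n + 3 from rfl]
    exact h
  have hpos : (0:ℝ) < (((n+4:ℕ):ℝ) ^ 2 + 2 * ((n+4:ℕ):ℝ)) ^ (n + 4 - 1) / (((n + 4 - 1).factorial : ℕ) : ℝ) * (1 / ((n+4:ℕ) : ℝ)) ^ (n + 4 + 1) := by
    rw [hxc]
    have : (0:ℝ) < ((n + 4 - 1).factorial : ℝ) := by positivity
    positivity
  have key : (((n+4:ℕ):ℝ) ^ 2 + 2 * ((n+4:ℕ):ℝ)) ^ (n + 4 - 1) / (((n + 4 - 1).factorial : ℕ) : ℝ) * (1 / ((n+4:ℕ) : ℝ)) ^ (n + 4 + 1) *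
      (((n + 4).factorial : ℝ) / (x + 2) ^ (n + 4 - 1)) = 1 / x := by
    rw [hxc]
    have h1 : n + 4 - 1 = n + 3 := by omega
    have h2 : n + 4 + 1 = (n + 3) + 2 := by omega
    rw [h1, h2]
    have hfac : ((n + 4).factorial : ℝ) = (((n:ℝ) + 4)) * ((n + 3).factorial : ℝ) := by
      have : (n + 4).factorial = (n + 4) * (n + 3).factorial := rfl
      rw [this]; push_cast; ring
    have hmul : (x ^ 2 + 2 * x) ^ (n + 3) = x ^ (n+3) * (x + 2) ^ (n+3) := by
      rw [← mul_pow]; ring_nf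
    have hfac0 : ((n + 3).factorial : ℝ) ≠ 0 := by positivity
    rw [hmul, hfac, pow_add, ← hx]
    field_simp [hx0.ne']
    ring_nf
    rw [← pow_add, mul_assoc, ← pow_add, ← mul_pow, mul_inv_cancel₀ hx0.ne', one_pow]
  calc ((((n+4:ℕ)) : ℝ) ^ 2 + 2 * ((n+4:ℕ))) ^ (n + 4 - 1) / (((n + 4 - 1).factorial) : ℝ) * (1 / ((n+4:ℕ) : ℝ)) ^ (n + 4 + 1) *
        ∏ k ∈ Finset.Icc 1 (n + 4 - 1), (((n+4:ℕ) : ℝ) + 1 + k) / (((n+4:ℕ) : ℝ) ^ 2 + (n+4:ℕ) + k)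
      ≤ (((n+4:ℕ):ℝ) ^ 2 + 2 * ((n+4:ℕ):ℝ)) ^ (n + 4 - 1) / (((n + 4 - 1).factorial : ℕ) : ℝ) * (1 / ((n+4:ℕ) : ℝ)) ^ (n + 4 + 1) *
        (((n + 4).factorial : ℝ) / (x + 2) ^ (n + 4 - 1)) := by
        rw [← hstep2] at *
        exact mul_le_mul_of_nonneg_left (hstep2 ▸ hstep1) hpos.le
    _ = 1 / x := key
    _ < 1 / (((n+4:ℕ) : ℝ) - 1) := by
        rw [hxc]
        apply one_div_lt_one_div_of_lt <;> [linarith; linarith]
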